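/- Let v: [a, ∞) → ℝ be nondecreasing, concave, bounded above with limit L at infinity, and differentiable on (a, ∞). Fix an integer K ≥ 2 and suppose h = min_{s=1..K} h_s is a K-piece piecewise-linear outer approximation of v on [a, ∞) such that: (1) the last piece is the constant L; (2) each piece h_s is tangent to v; and (3) the gaps h(B_s) - v(B_s) are equal for all s, where B_1 = a and B_2 < … < B_K are the break points of h. Then h minimizes the error sup_{τ ≥ a}(h(τ) - v(τ)) among all K-piece piecewise-linear outer approximations of v on [a, ∞). -/

import Mathlib

open Filter in
private lemma aux_deriv_nonneg {v : ℝ → ℝ} {a t dd : ℝ} (hm : MonotoneOn v (Set.Ici a))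
    (ht : a < t) (hd : HasDerivAt v dd t) : 0 ≤ dd := by
  have h1 : Tendsto (slope v t) (nhdsWithin t {t}ᶜ) (nhds dd) :=
    hasDerivAt_iff_tendsto_slope.mp hd
  have h2 : Tendsto (slope v t) (nhdsWithin t (Set.Ioi t)) (nhds dd) :=
    h1.mono_left (nhdsWithin_mono t (fun x hx => ne_of_gt hx))
  refine ge_of_tendsto h2 ?_
  filter_upwards [self_mem_nhdsWithin] with x hx
  have hx' : t < x := hx
  have hv : v t ≤ v x := hm (Set.mem_Ici.mpr ht.le) (Set.mem_Ici.mpr (ht.le.trans hx'.le)) hx'.le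
  have : 0 ≤ (v x - v t) / (x - t) := div_nonneg (by linarith) (by linarith)
  simpa [slope_def_field] using this

/-- multiplied-out concavity combination inequality -/
private lemma aux_combo {v : ℝ → ℝ} {a : ℝ} (hconc : ConcaveOn ℝ (Set.Ici a) v)
    {x y z : ℝ} (hx : a ≤ x) (hy : a ≤ y) (hxz : x ≤ z) (hzy : z ≤ y) (hxy : x < y) :
    (y - z) * v x + (z - x) * v y ≤ (y - x) * v z := by
  have hD : 0 < y - x := by linarith
  have h1 : (0:ℝ) ≤ (y - z)/(y - x) := div_nonneg (by linarith) hD.le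
  have h2 : (0:ℝ) ≤ (z - x)/(y - x) := div_nonneg (by linarith) hD.le
  have hs : (y - z)/(y - x) + (z - x)/(y - x) = 1 := by field_simp; ring
  have hcc := hconc.2 (Set.mem_Ici.mpr hx) (Set.mem_Ici.mpr hy) h1 h2 hs
  have hz : ((y - z)/(y - x)) • x + ((z - x)/(y - x)) • y = z := by
    simp only [smul_eq_mul]; field_simp; ring
  rw [hz] at hcc
  simp only [smul_eq_mul] at hcc
  have := mul_le_mul_of_nonneg_left hcc hD.le
  calc (y - z) * v x + (z - x) * v y
      = (y - x) * ((y - z)/(y - x) * v x + (z - x)/(y - x) * v y) := by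
        field_simp
    _ ≤ (y - x) * v z := this

set_option maxHeartbeats 1000000 in
open Filter in
theorem stmt_17 (a L : ℝ) (v : ℝ → ℝ)
    (hmono : MonotoneOn v (Set.Ici a))
    (hconc : ConcaveOn ℝ (Set.Ici a) v)
    (hcont : ContinuousOn v (Set.Ici a))
    (hdiff : ∀ t, a < t → DifferentiableAt ℝ v t)
    (hlim : Tendsto v atTop (nhds L))
    (hub : ∀ τ ∈ Set.Ici a, v τ ≤ L)
    (K : ℕ) (hK : 2 ≤ K)
    (d f : ℕ → ℝ)
    (h : ℝ → ℝ) (hh : ∀ τ, h τ = ⨅ s : Fin K, (d s * τ + f s))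
    (hdom : ∀ τ ∈ Set.Ici a, v τ ≤ h τ)
    -- (1) the last piece is the constant L
    (hlast : d (K - 1) = 0 ∧ f (K - 1) = L)
    -- (2) every non-constant piece is tangent to v
    (htan : ∀ s, s < K - 1 → ∃ t, a < t ∧ HasDerivAt v (d s) t ∧ d s * t + f s = v t)
    -- B 0 = a and B 1 < … < B (K-1) are the break points of h
    (B : ℕ → ℝ) (hB0 : B 0 = a)
    (hBmono : ∀ i, i + 1 ≤ K - 1 → B i < B (i + 1))
    (hbreak : ∀ s, 1 ≤ s → s ≤ K - 1 →
      d (s - 1) * B s + f (s - 1) = d s * B s + f s ∧ h (B s) = d s * B s + f s)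
    -- (3) the gaps at B 0, …, B (K-1) are all equal
    (hgap : ∀ i ≤ K - 1, ∀ j ≤ K - 1, h (B i) - v (B i) = h (B j) - v (B j)) :
    -- h minimizes the sup error among all K-piece PWL outer approximations on [a, ∞)
    ∀ d' f' : ℕ → ℝ,
      (∀ τ ∈ Set.Ici a, v τ ≤ ⨅ s : Fin K, (d' s * τ + f' s)) →
      BddAbove ((fun τ => (⨅ s : Fin K, (d' s * τ + f' s)) - v τ) '' Set.Ici a) →
      sSup ((fun τ => h τ - v τ) '' Set.Ici a) ≤
        sSup ((fun τ => (⨅ s : Fin K, (d' s * τ + f' s)) - v τ) '' Set.Ici a) := by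
  intro d' f' hdom' hbdd'
  haveI : Nonempty (Fin K) := ⟨⟨0, by omega⟩⟩
  set h' : ℝ → ℝ := fun τ => ⨅ s : Fin K, (d' s * τ + f' s) with hh'def
  -- basic B facts
  have hBa : ∀ i, i ≤ K - 1 → a ≤ B i := by
    intro i hi
    induction i with
    | zero => rw [hB0]
    | succ n ih =>
      have h1 := ih (by omega)
      have h2 := hBmono n hi
      linarith
  have hBlt : ∀ j, j ≤ K - 1 → ∀ i, i < j → B i < B j := by
    intro j hj
    induction j with
    | zero => intro i hi; omega
    | succ n ih =>
      intro i hi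
      have hn : B n < B (n+1) := hBmono n hj
      rcases Nat.lt_or_ge i n with h1 | h1
      · exact lt_trans (ih (by omega) i h1) hn
      · have : i = n := by omega
        subst this; exact hn
  -- h below every piece
  have hle_piece : ∀ (τ : ℝ) (s : ℕ), s < K → h τ ≤ d s * τ + f s := by
    intro τ s hs
    rw [hh]
    exact ciInf_le (Finite.bddBelow_range _) (⟨s, hs⟩ : Fin K)
  have hle_piece' : ∀ (τ : ℝ) (s : Fin K), h' τ ≤ d' s * τ + f' s := by
    intro τ s
    simp only [hh'def]
    exact ciInf_le (Finite.bddBelow_range _) s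
  set ε : ℝ := h (B 0) - v (B 0) with hεdef
  have hgapj : ∀ j, j ≤ K - 1 → h (B j) - v (B j) = ε := fun j hj => hgap j hj 0 (by omega)
  -- nonnegative slopes of h
  have hdnn : ∀ s, s < K - 1 → 0 ≤ d s := by
    intro s hs
    obtain ⟨t, hat, hder, _⟩ := htan s hs
    exact aux_deriv_nonneg hmono hat hder
  -- slopes nonincreasing
  have hdmono : ∀ s, s + 1 ≤ K - 1 → d (s + 1) ≤ d s := by
    intro s hs
    rcases Nat.lt_or_ge (s + 1) (K - 1) with hlt | hge
    · have hb1 := hbreak (s + 1) (by omega) (by omega)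
      have hb2 := hbreak (s + 2) (by omega) (by omega)
      have e0 : s + 1 - 1 = s := by omega
      have e0' : s + 2 - 1 = s + 1 := by omega
      rw [e0] at hb1; rw [e0'] at hb2
      have e1 : d s * B (s+1) + f s = d (s+1) * B (s+1) + f (s+1) := hb1.1
      have e2 : d (s+1) * B (s+2) + f (s+1) = d (s+2) * B (s+2) + f (s+2) := hb2.1
      have e3 : h (B (s+2)) = d (s+2) * B (s+2) + f (s+2) := hb2.2
      have e4 : h (B (s+2)) ≤ d s * B (s+2) + f s := hle_piece _ s (by omega)
      have hBlt' : B (s+1) < B (s+2) := hBmono (s+1) (by omega)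
      by_contra hcon
      push_neg at hcon
      linarith [e1, e2, e3, e4, mul_pos (sub_pos.mpr hcon) (sub_pos.mpr hBlt')]
    · have heq : s + 1 = K - 1 := by omega
      rw [heq, hlast.1]
      exact hdnn s (by omega)
  -- piece 0 is minimal at a
  have hstep : ∀ s, s + 1 ≤ K - 1 → d s * a + f s ≤ d (s+1) * a + f (s+1) := by
    intro s hs
    have hb1 := hbreak (s + 1) (by omega) hs
    have e0 : s + 1 - 1 = s := by omega
    rw [e0] at hb1
    have e1 : d s * B (s+1) + f s = d (s+1) * B (s+1) + f (s+1) := hb1.1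
    have hd := hdmono s hs
    have ha : a ≤ B (s+1) := hBa (s+1) hs
    linarith [e1, mul_nonneg (sub_nonneg.mpr hd) (sub_nonneg.mpr ha)]
  have hl0 : ∀ s, s < K → d 0 * a + f 0 ≤ d s * a + f s := by
    intro s hs
    induction s with
    | zero => exact le_rfl
    | succ n ih =>
      have h1 : n + 1 ≤ K - 1 := by omega
      exact le_trans (ih (by omega)) (hstep n h1)
  have hha : h a = d 0 * a + f 0 := by
    rw [hh]
    exact le_antisymm (ciInf_le (Finite.bddBelow_range _) (⟨0, by omega⟩ : Fin K))
      (le_ciInf fun s => hl0 s s.2)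
  have hactive : ∀ j, j ≤ K - 1 → h (B j) = d j * B j + f j := by
    intro j hj
    rcases Nat.eq_zero_or_pos j with h0 | h0
    · subst h0; rw [hB0]; exact hha
    · exact (hbreak j h0 hj).2
  have hend2 : ∀ j, j + 1 ≤ K - 1 → d j * B (j+1) + f j = h (B (j+1)) := by
    intro j hj
    have hb := hbreak (j+1) (by omega) hj
    have h1 : j + 1 - 1 = j := by omega
    rw [h1] at hb
    rw [hb.2]; exact hb.1
  -- gap values at interval endpoints, for the active piece
  have hgx' : ∀ j, j + 1 ≤ K - 1 → d j * B j + f j - v (B j) = ε := by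
    intro j hj
    rw [← hactive j (by omega)]
    exact hgapj j (by omega)
  have hgy' : ∀ j, j + 1 ≤ K - 1 → d j * B (j+1) + f j - v (B (j+1)) = ε := by
    intro j hj
    rw [hend2 j hj]
    exact hgapj (j+1) hj
  -- part (i) per-interval bound
  have hinterval : ∀ j, j + 1 ≤ K - 1 → ∀ τ, B j ≤ τ → τ ≤ B (j+1) → h τ - v τ ≤ ε := by
    intro j hj τ h1 h2
    have hxy : B j < B (j+1) := hBmono j hj
    have hax : a ≤ B j := hBa j (by omega)
    have hay : a ≤ B (j+1) := hBa (j+1) hj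
    have hgx := hgx' j hj
    have hgy := hgy' j hj
    have hcombo := aux_combo hconc hax hay h1 h2 hxy
    have hτle : h τ ≤ d j * τ + f j := hle_piece τ j (by omega)
    have hD : (0:ℝ) < B (j+1) - B j := by linarith
    have e1 : (B (j+1) - B j) * (d j * τ + f j)
        = (B (j+1) - τ) * (d j * B j + f j) + (τ - B j) * (d j * B (j+1) + f j) := by ring
    have hgx2 : (B (j+1) - τ) * (d j * B j + f j - v (B j)) = (B (j+1) - τ) * ε := by rw [hgx]
    have hgy2 : (τ - B j) * (d j * B (j+1) + f j - v (B (j+1))) = (τ - B j) * ε := by rw [hgy]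
    have key : (B (j+1) - B j) * (d j * τ + f j - v τ) ≤ (B (j+1) - B j) * ε := by
      linarith [hcombo, e1, hgx2, hgy2]
    have := le_of_mul_le_mul_left key hD
    linarith
  -- part (i)
  have hfind : ∀ n, n ≤ K - 1 → ∀ τ, a ≤ τ → τ < B n →
      ∃ j, j + 1 ≤ K - 1 ∧ B j ≤ τ ∧ τ ≤ B (j+1) := by
    intro n hn
    induction n with
    | zero => intro τ hτ h1; rw [hB0] at h1; exact absurd hτ (not_le.mpr h1)
    | succ m ih =>
      intro τ hτ h1
      rcases le_or_gt (B m) τ with h2 | h2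
      · exact ⟨m, hn, h2, h1.le⟩
      · exact ih (by omega) τ hτ h2
  have parti : ∀ τ, a ≤ τ → h τ - v τ ≤ ε := by
    intro τ hτ
    rcases le_or_gt (B (K-1)) τ with h1 | h1
    · have hhL : h τ ≤ L := by
        have := hle_piece τ (K-1) (by omega)
        rwa [hlast.1, hlast.2, zero_mul, zero_add] at this
      have e := hgapj (K-1) le_rfl
      rw [hactive (K-1) le_rfl, hlast.1, hlast.2, zero_mul, zero_add] at e
      have hv : v (B (K-1)) ≤ v τ :=
        hmono (Set.mem_Ici.mpr (hBa (K-1) le_rfl)) (Set.mem_Ici.mpr hτ) h1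
      linarith
    · obtain ⟨j, hj, h2, h3⟩ := hfind (K-1) le_rfl τ hτ h1
      exact hinterval j hj τ h2 h3
  -- localization of tangent points
  have hloc : 0 < ε → ∀ j, j + 1 ≤ K - 1 → ∀ t, a < t → d j * t + f j = v t →
      B j < t ∧ t < B (j+1) := by
    intro hεpos j hj t hat htv
    have hxy : B j < B (j+1) := hBmono j hj
    have hax : a ≤ B j := hBa j (by omega)
    have hay : a ≤ B (j+1) := hBa (j+1) hj
    have hgx := hgx' j hj
    have hgy := hgy' j hj
    constructor
    · by_contra hcon
      push_neg at hcon   -- t ≤ B j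
      rcases eq_or_lt_of_le hcon with heq | hlt
      · rw [heq] at htv; rw [htv] at hgx; linarith
      · -- t < B j ; combo with x = t, z = B j, y = B (j+1)
        have hcombo := aux_combo hconc hat.le hay hcon (le_of_lt hxy) (lt_trans hlt hxy)
        have e1 : (B (j+1) - t) * (d j * B j + f j)
            = (B (j+1) - B j) * (d j * t + f j) + (B j - t) * (d j * B (j+1) + f j) := by ring
        have hgx2 : (B (j+1) - B j) * (d j * t + f j) = (B (j+1) - B j) * v t := by rw [htv]
        have hgy2 : (B j - t) * (d j * B (j+1) + f j - v (B (j+1))) = (B j - t) * ε := by rw [hgy]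
        have hgz2 : (B (j+1) - t) * (d j * B j + f j - v (B j)) = (B (j+1) - t) * ε := by rw [hgx]
        have key : (B (j+1) - t) * ε ≤ (B j - t) * ε := by
          linarith [hcombo, e1, hgx2, hgy2, hgz2]
        linarith [key, mul_pos (sub_pos.mpr hxy) hεpos]
    · by_contra hcon
      push_neg at hcon   -- B (j+1) ≤ t
      rcases eq_or_lt_of_le hcon with heq | hlt
      · rw [← heq] at htv; rw [htv] at hgy; linarith
      · -- B (j+1) < t ; combo with x = B j, z = B (j+1), y = t
        have hcombo := aux_combo hconc hax hat.le (le_of_lt hxy) (le_of_lt hlt)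
          (lt_trans hxy hlt)
        have e1 : (t - B j) * (d j * B (j+1) + f j)
            = (t - B (j+1)) * (d j * B j + f j) + (B (j+1) - B j) * (d j * t + f j) := by ring
        have hgx2 : (t - B (j+1)) * (d j * B j + f j - v (B j)) = (t - B (j+1)) * ε := by rw [hgx]
        have hgy2 : (B (j+1) - B j) * (d j * t + f j) = (B (j+1) - B j) * v t := by rw [htv]
        have hgz2 : (t - B j) * (d j * B (j+1) + f j - v (B (j+1))) = (t - B j) * ε := by rw [hgy]
        have key : (t - B j) * ε ≤ (t - B (j+1)) * ε := by
          linarith [hcombo, e1, hgx2, hgy2, hgz2]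
        linarith [key, mul_pos (sub_pos.mpr hxy) hεpos]
  -- now part (ii)
  have hgoal : ((fun τ => (⨅ s : Fin K, (d' s * τ + f' s)) - v τ) '' Set.Ici a)
      = ((fun τ => h' τ - v τ) '' Set.Ici a) := rfl
  rw [hgoal] at hbdd' ⊢
  have himg' : ∀ τ, a ≤ τ →
      h' τ - v τ ≤ sSup ((fun τ => h' τ - v τ) '' Set.Ici a) := by
    intro τ hτ
    exact le_csSup hbdd' ⟨τ, hτ, rfl⟩
  set E' : ℝ := sSup ((fun τ => h' τ - v τ) '' Set.Ici a) with hE'def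
  have hdomh' : ∀ τ, a ≤ τ → v τ ≤ h' τ := fun τ hτ => hdom' τ (Set.mem_Ici.mpr hτ)
  have hE'0 : 0 ≤ E' := by
    have h0 : 0 ≤ h' a - v a := by linarith [hdomh' a le_rfl]
    linarith [himg' a le_rfl]
  have partii : ε ≤ E' := by
    by_contra hcon
    push_neg at hcon  -- E' < ε
    have hεpos : 0 < ε := lt_of_le_of_lt hE'0 hcon
    -- all slopes of h' are nonnegative
    have hd'nn : ∀ s : Fin K, 0 ≤ d' s := by
      intro s
      by_contra hneg
      push_neg at hneg
      set τ0 := max a ((v a - 1 - f' s)/(d' s)) with hτ0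
      have hτ0a : a ≤ τ0 := le_max_left _ _
      have h1 : (v a - 1 - f' s)/(d' s) ≤ τ0 := le_max_right _ _
      have h2 : d' s * τ0 ≤ v a - 1 - f' s := by
        have h3 := mul_le_mul_of_nonpos_left h1 hneg.le
        have h4 : d' (s:ℕ) * ((v a - 1 - f' s)/(d' s)) = v a - 1 - f' s := by
          rw [mul_div_assoc']
          exact mul_div_cancel_left₀ _ (ne_of_lt hneg)
        linarith
      have h4 : v τ0 ≤ d' s * τ0 + f' s := le_trans (hdomh' τ0 hτ0a) (hle_piece' τ0 s)
      have h5 : v a ≤ v τ0 := hmono (Set.mem_Ici.mpr le_rfl) (Set.mem_Ici.mpr hτ0a) hτ0a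
      linarith
    -- there is a piece with zero slope
    have hzero : ∃ s : Fin K, d' s = 0 := by
      by_contra hno
      push_neg at hno
      have hpos : ∀ s : Fin K, 0 < d' s :=
        fun s => lt_of_le_of_ne (hd'nn s) (Ne.symm (hno s))
      obtain ⟨s0, hs0⟩ := Finite.exists_min (fun s : Fin K => d' s)
      obtain ⟨s1, hs1⟩ := Finite.exists_min (fun s : Fin K => f' s)
      set τ1 := max (max a 0) ((L + E' + 1 - f' s1)/(d' s0)) with hτ1
      have hτ1a : a ≤ τ1 := le_trans (le_max_left a 0) (le_max_left _ _)
      have hτ10 : (0:ℝ) ≤ τ1 := le_trans (le_max_right a 0) (le_max_left _ _)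
      have h1 : (L + E' + 1 - f' s1)/(d' s0) ≤ τ1 := le_max_right _ _
      have h2 : L + E' + 1 - f' s1 ≤ d' s0 * τ1 := by
        rw [div_le_iff₀ (hpos s0)] at h1
        linarith
      have h3 : d' s0 * τ1 + f' s1 ≤ h' τ1 := by
        simp only [hh'def]
        apply le_ciInf
        intro s
        have ha := mul_le_mul_of_nonneg_right (hs0 s) hτ10
        have hb := hs1 s
        linarith
      have h4 : h' τ1 - v τ1 ≤ E' := himg' τ1 hτ1a
      have h5 : v τ1 ≤ L := hub τ1 (Set.mem_Ici.mpr hτ1a)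
      linarith
    obtain ⟨σω, hσω⟩ := hzero
    have hfL : L ≤ f' σω := by
      apply le_of_tendsto hlim
      filter_upwards [eventually_ge_atTop a] with τ hτ
      have h1 := le_trans (hdomh' τ hτ) (hle_piece' τ σω)
      rw [hσω] at h1
      linarith
    -- argmin selection at the break points
    have hsel : ∀ p : Fin K, ∃ σ : Fin K, d' σ * B p + f' σ = h' (B p) := by
      intro p
      obtain ⟨σ, hσ⟩ := Finite.exists_min (fun s : Fin K => d' s * B p + f' s)
      refine ⟨σ, le_antisymm ?_ (hle_piece' _ σ)⟩
      simp only [hh'def]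
      exact le_ciInf hσ
    choose S hS using hsel
    -- pigeonhole map
    set F : Fin (K+1) → Fin K :=
      fun p => if hp : (p : ℕ) < K then S ⟨(p:ℕ), hp⟩ else σω with hF
    have main : ∀ p q : Fin (K+1), (p:ℕ) < (q:ℕ) → F p = F q → False := by
      intro p q hlt hFeq
      have hpK : (p:ℕ) < K := by omega
      have hFp : F p = S ⟨(p:ℕ), hpK⟩ := by rw [hF]; exact dif_pos hpK
      have hvalp : d' (F p) * B (p:ℕ) + f' (F p) = h' (B (p:ℕ)) := by
        rw [hFp]; exact hS ⟨(p:ℕ), hpK⟩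
      have hp1 : (p:ℕ) ≤ K - 1 := by omega
      have herrp : h' (B (p:ℕ)) ≤ v (B (p:ℕ)) + E' := by
        linarith [himg' (B (p:ℕ)) (hBa (p:ℕ) hp1)]
      have hgapBp : h (B (p:ℕ)) = v (B (p:ℕ)) + ε := by
        linarith [hgapj (p:ℕ) hp1]
      rcases Nat.lt_or_ge (q:ℕ) K with hqK | hqK
      · -- two break points share a piece
        have hFq : F q = S ⟨(q:ℕ), hqK⟩ := by rw [hF]; exact dif_pos hqK
        have hvalq : d' (F p) * B (q:ℕ) + f' (F p) = h' (B (q:ℕ)) := by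
          rw [hFeq, hFq]; exact hS ⟨(q:ℕ), hqK⟩
        have hq1 : (q:ℕ) ≤ K - 1 := by omega
        have hj2 : (p:ℕ) + 1 ≤ K - 1 := by omega
        have herrq : h' (B (q:ℕ)) ≤ v (B (q:ℕ)) + E' := by
          linarith [himg' (B (q:ℕ)) (hBa (q:ℕ) hq1)]
        have hgapBq : h (B (q:ℕ)) = v (B (q:ℕ)) + ε := by
          linarith [hgapj (q:ℕ) hq1]
        -- the shared piece lies strictly below piece p of h at both points
        have hu_p : d' (F p) * B (p:ℕ) + f' (F p) < d (p:ℕ) * B (p:ℕ) + f (p:ℕ) := by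
          rw [hvalp, ← hactive (p:ℕ) hp1]
          linarith
        have hu_q : d' (F p) * B (q:ℕ) + f' (F p) < d (p:ℕ) * B (q:ℕ) + f (p:ℕ) := by
          have hhb := hle_piece (B (q:ℕ)) (p:ℕ) hpK
          rw [hvalq]
          linarith
        obtain ⟨t, hat, hder, htv⟩ := htan (p:ℕ) (by omega)
        obtain ⟨hBt1, hBt2⟩ := hloc hεpos (p:ℕ) hj2 t hat htv
        have htq : t < B (q:ℕ) := by
          rcases eq_or_lt_of_le (show (p:ℕ) + 1 ≤ (q:ℕ) from hlt) with he | hl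
          · rw [← he]; exact hBt2
          · exact lt_trans hBt2 (hBlt (q:ℕ) hq1 ((p:ℕ)+1) hl)
        have hBpq : B (p:ℕ) < t := hBt1
        -- affine comparison on [B p, B q]
        have hbt : d' (F p) * t + f' (F p) < d (p:ℕ) * t + f (p:ℕ) := by
          rcases le_or_gt (d' (F p)) (d (p:ℕ)) with hA | hA
          · linarith [hu_p, mul_le_mul_of_nonneg_right hA (le_of_lt (sub_pos.mpr hBpq))]
          · linarith [hu_q, mul_le_mul_of_nonneg_right hA.le (le_of_lt (sub_pos.mpr htq))]
        have hvt : v t ≤ d' (F p) * t + f' (F p) :=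
          le_trans (hdomh' t hat.le) (hle_piece' t (F p))
        rw [← htv] at hvt
        linarith
      · -- a break point shares the constant-at-infinity piece
        have hFq : F q = σω := by rw [hF]; exact dif_neg (by omega)
        have hσeq : F p = σω := by rw [hFeq, hFq]
        have hhL : h (B (p:ℕ)) ≤ L := by
          have := hle_piece (B (p:ℕ)) (K-1) (by omega)
          rwa [hlast.1, hlast.2, zero_mul, zero_add] at this
        have hfval : f' σω = h' (B (p:ℕ)) := by
          rw [← hvalp, hσeq, hσω]; ring
        linarith
    obtain ⟨p, q, hpq, hFpq⟩ := Fintype.exists_ne_map_eq_of_card_lt F (by simp)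
    rcases Nat.lt_trichotomy (p:ℕ) (q:ℕ) with hlt | heq | hgt
    · exact main p q hlt hFpq
    · exact hpq (Fin.ext heq)
    · exact main q p hgt hFpq.symm
  refine Real.sSup_le ?_ hE'0
  rintro x ⟨τ, hτ, rfl⟩
  exact le_trans (parti τ hτ) partii
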